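/- For a two-dimensional Jackson network with p(2,0) > 0, the first queue's stability ν_1 < μ_1 holds if and only if r_1 < 1, where r_1 = (p(0,1) + (p(2,1)/p(2,0))(1 + p(1,0)p(2,1)/p(2,0) − μ_2)) / ((μ_2/p(2,0))(μ_2 p(1,0)/p(2,0) + p(1,2))) is the nontrivial third root of the reduced boundary characteristic polynomial p_2^r (whose other roots are 0 and 1). -/

import Mathlib

/-- For a two-dimensional Jackson network with `p(2,0) > 0`, stability of the
first queue `ν₁ < μ₁` holds if and only if the nontrivial root `r₁` of the
reduced boundary characteristic polynomial is less than one. -/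
theorem first_queue_stability_iff_r1_lt_one
    (p01 p02 p10 p20 p12 p21 μ1 μ2 ν1 ν2 : ℝ)
    (h01 : 0 ≤ p01) (h02 : 0 ≤ p02) (h10 : 0 ≤ p10) (h20 : 0 < p20)
    (h12 : 0 ≤ p12) (h21 : 0 ≤ p21)
    (hsum : p01 + p02 + p10 + p20 + p12 + p21 = 1)
    (hμ1 : μ1 = p10 + p12) (hμ2 : μ2 = p20 + p21)
    (hμ1pos : 0 < μ1)
    (hν1 : ν1 = p01 + p21 / μ2 * ν2) (hν2 : ν2 = p02 + p12 / μ1 * ν1) :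
    ν1 < μ1 ↔
      (p01 + p21 / p20 * (1 + p10 * p21 / p20 - μ2)) /
        (μ2 / p20 * (μ2 * p10 / p20 + p12)) < 1 := by
  have hμ2pos : 0 < μ2 := by rw [hμ2]; linarith
  have hμ1' : μ1 ≠ 0 := ne_of_gt hμ1pos
  have hμ2' : μ2 ≠ 0 := ne_of_gt hμ2pos
  have h20' : p20 ≠ 0 := ne_of_gt h20
  have hD0 : 0 < μ2 / p20 * (μ2 * p10 / p20 + p12) := by
    have h1 : 0 < μ2 * p10 + p12 * p20 := by nlinarith
    have : 0 < μ2 * p10 / p20 + p12 := by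
      rw [div_add' _ _ _ h20']
      exact div_pos (by nlinarith) h20
    exact mul_pos (div_pos hμ2pos h20) this
  have hden : 0 < μ1 * μ2 - p12 * p21 := by nlinarith
  -- linear relation for ν1
  have e1 : ν1 * μ2 = p01 * μ2 + p21 * ν2 := by
    rw [hν1]; field_simp
  have e2 : ν2 * μ1 = p02 * μ1 + p12 * ν1 := by
    rw [hν2]; field_simp
  have hkey : ν1 * (μ1 * μ2 - p12 * p21) = μ1 * μ2 * p01 + μ1 * p21 * p02 := by
    linear_combination μ1 * e1 + p21 * e2
  have hA : ν1 < μ1 ↔ 0 < (μ1 * μ2 - p12 * p21) - (μ2 * p01 + p21 * p02) := by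
    constructor
    · intro h; nlinarith
    · intro h; nlinarith
  rw [hA, div_lt_one hD0,
    ← sub_pos (a := μ2 / p20 * (μ2 * p10 / p20 + p12))
      (b := p01 + p21 / p20 * (1 + p10 * p21 / p20 - μ2))]
  have hE : μ2 / p20 * (μ2 * p10 / p20 + p12) -
      (p01 + p21 / p20 * (1 + p10 * p21 / p20 - μ2)) =
      ((μ1 * μ2 - p12 * p21) - (μ2 * p01 + p21 * p02)) / p20 := by
    rw [hμ1, hμ2]
    field_simp
    linear_combination (p20 * p21) * hsum
  rw [hE]
  constructor
  · intro h; exact div_pos h h20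
  · intro h
    nlinarith [mul_pos h h20,
      div_mul_cancel₀ (μ1 * μ2 - p12 * p21 - (μ2 * p01 + p21 * p02)) h20']
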